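/- arXiv:1708.06478 — 4 statements merged into one kernel-verified Lean document; each statement's English description precedes it below -/
import Mathlib

section
/- Let $X_1,\dots,X_N$ be independent Bernoulli random variables with success probabilities $p_1,\dots,p_N \in [0,1]$, and let $X = \sum_{n=1}^N X_n$ (so $X$ follows a Poisson binomial distribution). Let $\hat X$ be a binomial random variable with $N$ trials and success probability $\hat p$ satisfying $0 \le \hat p \le p_n$ for all $n$. Then for every integer $x$ with $0 \le x \le N$, $\Pr(X \ge x) \ge \Pr(\hat X \ge x)$. -/
open MeasureTheory ProbabilityTheory


noncomputable def btail (p : ℝ) (m x : ℕ) : ℝ :=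
  ∑ k ∈ Finset.Icc x m, (m.choose k : ℝ) * p ^ k * (1 - p) ^ (m - k)

lemma btail_zero (p : ℝ) (m : ℕ) : btail p m 0 = 1 := by
  have h := add_pow p (1 - p) m
  simp only [add_sub_cancel, one_pow] at h
  unfold btail
  rw [← Finset.Ico_add_one_right_eq_Icc, Nat.Ico_zero_eq_range]
  refine Eq.trans ?_ h.symm
  exact Finset.sum_congr rfl fun k _ => by ring

lemma btail_nonneg {p : ℝ} (h0 : 0 ≤ p) (h1 : p ≤ 1) (m x : ℕ) : 0 ≤ btail p m x := by
  apply Finset.sum_nonneg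
  intro k _
  have : (0:ℝ) ≤ 1 - p := by linarith
  positivity

lemma btail_anti {p : ℝ} (h0 : 0 ≤ p) (h1 : p ≤ 1) (m x : ℕ) :
    btail p m (x + 1) ≤ btail p m x := by
  apply Finset.sum_le_sum_of_subset_of_nonneg
  · exact Finset.Icc_subset_Icc_left (Nat.le_succ x)
  · intro k _ _
    have : (0:ℝ) ≤ 1 - p := by linarith
    positivity

lemma shift_sum (f : ℕ → ℝ) (y m : ℕ) :
    ∑ k ∈ Finset.Icc (y+1) (m+1), f k = ∑ j ∈ Finset.Icc y m, f (j+1) := by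
  rw [← Finset.map_add_right_Icc y m 1, Finset.sum_map]
  rfl

lemma btail_succ (p : ℝ) (m y : ℕ) :
    btail p (m + 1) (y + 1) = p * btail p m y + (1 - p) * btail p m (y + 1) := by
  classical
  unfold btail
  rw [shift_sum]
  have step : ∀ j ∈ Finset.Icc y m,
      ((m+1).choose (j+1) : ℝ) * p ^ (j+1) * (1 - p) ^ (m + 1 - (j+1)) =
      p * ((m.choose j : ℝ) * p ^ j * (1 - p) ^ (m - j))
        + (m.choose (j+1) : ℝ) * p ^ (j+1) * (1 - p) ^ (m - j) := by
    intro j hj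
    have : (m+1).choose (j+1) = m.choose j + m.choose (j+1) := Nat.choose_succ_succ m j
    rw [this]
    push_cast [Nat.succ_sub_succ]
    ring
  rw [Finset.sum_congr rfl step, Finset.sum_add_distrib, ← Finset.mul_sum]
  congr 1
  -- second piece equals (1-p) * ∑_{k ∈ Icc (y+1) m}
  have h2 : ∑ j ∈ Finset.Icc y m, (m.choose (j+1) : ℝ) * p ^ (j+1) * (1 - p) ^ (m - j)
      = ∑ k ∈ Finset.Icc (y+1) (m+1), (m.choose k : ℝ) * p ^ k * (1 - p) ^ (m + 1 - k) := by
    rw [shift_sum]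
    exact Finset.sum_congr rfl fun j hj => by
      have : m + 1 - (j + 1) = m - j := by omega
      rw [this]
  rw [h2]
  by_cases hy : y + 1 ≤ m + 1
  · rw [show Finset.Icc (y+1) (m+1) = insert (m+1) (Finset.Icc (y+1) m) by
      rw [← Finset.Ico_add_one_right_eq_Icc, (show Finset.Ico (y+1) (m+1+1) = insert (m+1) (Finset.Ico (y+1) (m+1)) from Nat.Ico_succ_right_eq_insert_Ico hy), Finset.Ico_add_one_right_eq_Icc]]
    rw [Finset.sum_insert (by simp)]
    simp only [Nat.choose_succ_self, Nat.cast_zero, zero_mul]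
    rw [Finset.mul_sum]
    rw [zero_add]
    exact Finset.sum_congr rfl fun k hk => by
      have hk' : k ≤ m := (Finset.mem_Icc.mp hk).2
      have : m + 1 - k = (m - k) + 1 := by omega
      rw [this, pow_succ]; ring
  · have h1 : Finset.Icc (y+1) (m+1) = ∅ := Finset.Icc_eq_empty (by omega)
    have h2 : Finset.Icc (y+1) m = ∅ := Finset.Icc_eq_empty (by omega)
    simp [h1, h2]

lemma key {Ω : Type*} [MeasurableSpace Ω] (μ : Measure Ω) [IsProbabilityMeasure μ]
    (N : ℕ) (X : Fin N → Ω → ℕ) (p : Fin N → ℝ)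
    (hp0 : ∀ n, 0 ≤ p n) (hp1 : ∀ n, p n ≤ 1)
    (hmeas : ∀ n, Measurable (X n))
    (hindep : iIndepFun X μ)
    (hval : ∀ n ω, X n ω = 0 ∨ X n ω = 1)
    (hBern : ∀ n, (μ {ω | X n ω = 1}).toReal = p n)
    (phat : ℝ) (hphat0 : 0 ≤ phat) (hphatle : ∀ n, phat ≤ p n)
    (s : Finset (Fin N)) :
    ∀ x : ℕ, btail phat s.card x ≤ (μ {ω | x ≤ ∑ n ∈ s, X n ω}).toReal := by
  classical
  induction s using Finset.cons_induction with
  | empty =>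
    intro x
    match x with
    | 0 =>
      have : {ω : Ω | (0:ℕ) ≤ ∑ n ∈ (∅:Finset (Fin N)), X n ω} = Set.univ := by
        ext ω; simp
      rw [Finset.card_empty, btail_zero, this, measure_univ, ENNReal.toReal_one]
    | Nat.succ y =>
      have h1 : btail phat 0 (y+1) = 0 := by
        unfold btail
        rw [Finset.Icc_eq_empty (by omega), Finset.sum_empty]
      rw [Finset.card_empty, h1]
      exact ENNReal.toReal_nonneg
  | cons i s hi IH =>
    intro x
    have hphat1 : phat ≤ 1 := le_trans (hphatle i) (hp1 i)
    set m := s.card with hm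
    rw [Finset.card_cons]
    have hsum : ∀ ω, ∑ n ∈ Finset.cons i s hi, X n ω = X i ω + ∑ n ∈ s, X n ω := by
      intro ω; rw [Finset.sum_cons]
    match x with
    | 0 =>
      have : {ω : Ω | (0:ℕ) ≤ ∑ n ∈ Finset.cons i s hi, X n ω} = Set.univ := by
        ext ω; simp
      rw [this, measure_univ, ENNReal.toReal_one, btail_zero]
    | Nat.succ y =>
      set S : Ω → ℕ := fun ω => ∑ n ∈ s, X n ω with hS
      have hSmeas : Measurable S := Finset.measurable_sum s fun n _ => hmeas n
      have hind : IndepFun S (X i) μ := by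
        have h := hindep.indepFun_finsetSum_of_notMem hmeas hi (s := s)
        have hSeq : S = ∑ j ∈ s, X j := by ext ω; simp [hS, Finset.sum_apply]
        rw [hSeq]; exact h
      set A : Set Ω := X i ⁻¹' {1} with hA
      have hAmeas : MeasurableSet A := (hmeas i) (measurableSet_singleton 1)
      set B1 : Set Ω := S ⁻¹' {k | y ≤ k} with hB1
      set B2 : Set Ω := S ⁻¹' {k | y + 1 ≤ k} with hB2
      have hE : {ω | y + 1 ≤ ∑ n ∈ Finset.cons i s hi, X n ω}
          = (B1 ∩ A) ∪ (B2 ∩ Aᶜ) := by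
        ext ω
        simp only [Set.mem_setOf_eq, Finset.sum_cons, Set.mem_union, Set.mem_inter_iff,
          Set.mem_preimage, Set.mem_compl_iff, Set.mem_singleton_iff, hS, hB1, hB2, hA]
        rcases hval i ω with h | h <;> rw [h] <;> omega
      have hdisj : Disjoint (B1 ∩ A) (B2 ∩ Aᶜ) :=
        Disjoint.mono Set.inter_subset_right Set.inter_subset_right
          disjoint_compl_right
      have hm1 : μ (B1 ∩ A) = μ B1 * μ A :=
        hind.measure_inter_preimage_eq_mul _ _ (MeasurableSet.of_discrete)
          (measurableSet_singleton 1)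
      have hm2 : μ (B2 ∩ Aᶜ) = μ B2 * μ Aᶜ := by
        have : Aᶜ = X i ⁻¹' ({1}ᶜ) := rfl
        rw [this]
        exact hind.measure_inter_preimage_eq_mul _ _ (MeasurableSet.of_discrete)
          (measurableSet_singleton 1).compl
      have hmeasE : (μ ((B1 ∩ A) ∪ (B2 ∩ Aᶜ))).toReal
          = (μ B1).toReal * (μ A).toReal + (μ B2).toReal * (μ Aᶜ).toReal := by
        rw [measure_union hdisj (((hSmeas MeasurableSet.of_discrete)).inter hAmeas.compl),
          hm1, hm2, ENNReal.toReal_add (ENNReal.mul_ne_top (measure_ne_top μ _) (measure_ne_top μ _))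
            (ENNReal.mul_ne_top (measure_ne_top μ _) (measure_ne_top μ _)),
          ENNReal.toReal_mul, ENNReal.toReal_mul]
      have hPA : (μ A).toReal = p i := by
        have hAeq : A = {ω | X i ω = 1} := by ext ω; simp [hA]
        rw [hAeq, hBern i]
      have hPAc : (μ Aᶜ).toReal = 1 - p i := by
        rw [prob_compl_eq_one_sub hAmeas,
          ENNReal.toReal_sub_of_le prob_le_one ENNReal.one_ne_top,
          ENNReal.toReal_one, hPA]
      have hIH1 : btail phat m y ≤ (μ B1).toReal := IH y
      have hIH2 : btail phat m (y+1) ≤ (μ B2).toReal := IH (y+1)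
      rw [hE, hmeasE, hPA, hPAc, btail_succ]
      have hanti := btail_anti hphat0 hphat1 m y
      have hnn := btail_nonneg hphat0 hphat1 m (y+1)
      have hB1nn : (0:ℝ) ≤ (μ B1).toReal := ENNReal.toReal_nonneg
      nlinarith [hphatle i, hp0 i, hp1 i, hphat0,
        mul_le_mul_of_nonneg_left hIH1 (hp0 i),
        mul_le_mul_of_nonneg_left hIH2 (sub_nonneg.mpr (hp1 i)),
        mul_le_mul_of_nonneg_right (sub_nonneg.mpr (hphatle i)) (sub_nonneg.mpr hanti)]

/-- **Lemma 1 of the paper.** The tail (ccdf) of a Poisson binomial random variable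
`X = ∑ Xₙ`, with independent Bernoulli summands of success probabilities `pₙ`,
dominates the tail of a binomial random variable with the same number `N` of trials
and success probability `p̂ ≤ pₙ` for all `n`.  The binomial tail probability
`Pr(X̂ ≥ x)` is written out explicitly as `∑_{k=x}^{N} C(N,k) p̂^k (1-p̂)^(N-k)`. -/
theorem poisson_binomial_tail_ge_binomial_tail
    {Ω : Type*} [MeasurableSpace Ω] (μ : Measure Ω) [IsProbabilityMeasure μ]
    (N : ℕ) (X : Fin N → Ω → ℕ) (p : Fin N → ℝ)
    (hp0 : ∀ n, 0 ≤ p n) (hp1 : ∀ n, p n ≤ 1)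
    (hmeas : ∀ n, Measurable (X n))
    (hindep : iIndepFun X μ)
    (hval : ∀ n ω, X n ω = 0 ∨ X n ω = 1)
    (hBern : ∀ n, (μ {ω | X n ω = 1}).toReal = p n)
    (phat : ℝ) (hphat0 : 0 ≤ phat) (hphatle : ∀ n, phat ≤ p n)
    (x : ℕ) (hx : x ≤ N) :
    (μ {ω | x ≤ ∑ n, X n ω}).toReal ≥
      ∑ k ∈ Finset.Icc x N, (N.choose k : ℝ) * phat ^ k * (1 - phat) ^ (N - k) := by
  have h := key μ N X p hp0 hp1 hmeas hindep hval hBern phat hphat0 hphatle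
    Finset.univ x
  rw [Finset.card_univ, Fintype.card_fin] at h
  exact h
end

section
/- Let $K \ge 2$ and let $d : \mathrm{Fin}\,K \to \mathrm{Fin}\,K \to \mathbb{R}$ be a nonnegative distance function. Extend $d$ to $d'$ on $K+1$ vertices by adding a dummy vertex whose distance to and from every original vertex is $0$ (and $d'$ agrees with $d$ on the original vertices). Then the minimum over all Hamiltonian cycles on the $K+1$ vertices of the total cycle length under $d'$ equals the minimum over all Hamiltonian paths on the original $K$ vertices (i.e., over all orderings $\sigma$ of $\mathrm{Fin}\,K$, with cost $\sum_{i=0}^{K-2} d(\sigma(i), \sigma(i+1))$) of the total path length under $d$. -/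
/-- Cost of the Hamiltonian path visiting the vertices of `Fin K` in the order
`σ 0, σ 1, …, σ (K-1)`: the sum of the distances between consecutive vertices. -/
noncomputable def pathCost {K : ℕ} (d : Fin K → Fin K → ℝ) (σ : Equiv.Perm (Fin K)) : ℝ :=
  ∑ i : Fin K, if h : (i : ℕ) + 1 < K then d (σ i) (σ ⟨(i : ℕ) + 1, h⟩) else 0

/-- Cost of the Hamiltonian cycle visiting the vertices of `Fin (K+1)` in the order
`σ 0, σ 1, …, σ K, σ 0`: the sum of the distances between consecutive vertices,
including the closing edge back to the start (`i + 1` wraps around in `Fin (K+1)`). -/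
noncomputable def cycleCost {K : ℕ} (d : Fin (K + 1) → Fin (K + 1) → ℝ)
    (σ : Equiv.Perm (Fin (K + 1))) : ℝ :=
  ∑ i : Fin (K + 1), d (σ i) (σ (i + 1))

lemma cycleCost_rot {K : ℕ} (d : Fin (K+1) → Fin (K+1) → ℝ)
    (τ : Equiv.Perm (Fin (K+1))) (c : Fin (K+1)) :
    cycleCost d ((Equiv.addRight c).trans τ) = cycleCost d τ := by
  unfold cycleCost
  apply Fintype.sum_equiv (Equiv.addRight c)
  intro i
  simp only [Equiv.trans_apply, Equiv.coe_addRight]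
  rw [add_right_comm]

lemma core {K : ℕ} (hK : 0 < K) (d : Fin K → Fin K → ℝ)
    (d' : Fin (K + 1) → Fin (K + 1) → ℝ)
    (horig : ∀ i j : Fin K, d' i.castSucc j.castSucc = d i j)
    (hto : ∀ i : Fin K, d' i.castSucc (Fin.last K) = 0)
    (hfrom : ∀ i : Fin K, d' (Fin.last K) i.castSucc = 0)
    (τ : Equiv.Perm (Fin (K+1))) (hτ : τ (Fin.last K) = Fin.last K)
    (σ : Equiv.Perm (Fin K)) (hσ : ∀ i : Fin K, τ i.castSucc = (σ i).castSucc) :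
    cycleCost d' τ = pathCost d σ := by
  unfold cycleCost pathCost
  rw [Fin.sum_univ_castSucc]
  have hlast1 : (Fin.last K) + 1 = 0 := by
    ext
    simp [Fin.last, Fin.add_def]
  have h0 : (0 : Fin (K+1)) = (⟨0, hK⟩ : Fin K).castSucc := rfl
  have hlastterm : d' (τ (Fin.last K)) (τ (Fin.last K + 1)) = 0 := by
    rw [hτ, hlast1, h0, hσ, hfrom]
  rw [hlastterm, add_zero]
  apply Finset.sum_congr rfl
  intro j _
  by_cases h : (j : ℕ) + 1 < K
  · have hstep : (j.castSucc : Fin (K+1)) + 1 = ((⟨(j:ℕ)+1, h⟩ : Fin K)).castSucc := by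
      ext
      rw [Fin.val_add_one_of_lt (by exact Fin.castSucc_lt_last j)]
      rfl
    rw [hstep, hσ, hσ, horig, dif_pos h]
  · have hjK : (j : ℕ) + 1 = K := by omega
    have hstep : (j.castSucc : Fin (K+1)) + 1 = Fin.last K := by
      ext
      rw [Fin.val_add_one_of_lt (by exact Fin.castSucc_lt_last j)]
      exact hjK
    rw [hstep, hτ, hσ, hto, dif_neg h]

/-- **Appendix C of the paper, variation `NoReturn-ArbitraryOriginAndEnd`.**
For `K ≥ 2` cities with nonnegative distances `d`, extend `d` to `d'` by adding a
dummy city (the vertex `Fin.last K`) whose distance to and from every original city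
is `0`.  Then the minimum total length over all Hamiltonian cycles on the `K+1`
cities under `d'` equals the minimum total length over all Hamiltonian paths on the
original `K` cities (with free endpoints) under `d`. -/
theorem tsp_dummy_free_endpoints
    (K : ℕ) (hK : 2 ≤ K) (d : Fin K → Fin K → ℝ) (hd : ∀ i j, 0 ≤ d i j)
    (d' : Fin (K + 1) → Fin (K + 1) → ℝ)
    (horig : ∀ i j : Fin K, d' i.castSucc j.castSucc = d i j)
    (hto : ∀ i : Fin K, d' i.castSucc (Fin.last K) = 0)
    (hfrom : ∀ i : Fin K, d' (Fin.last K) i.castSucc = 0) :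
    (⨅ σ : Equiv.Perm (Fin (K + 1)), cycleCost d' σ)
      = ⨅ σ : Equiv.Perm (Fin K), pathCost d σ := by
  have hK0 : 0 < K := by omega
  apply le_antisymm
  · -- for each σ build τ
    apply le_ciInf
    intro σ
    -- τ : extend σ by fixing last
    have hinj : Function.Injective
        (fun i : Fin (K+1) => Fin.lastCases (motive := fun _ => Fin (K+1)) (Fin.last K) (fun j => (σ j).castSucc) i) := by
      intro a b hab
      rcases Fin.eq_castSucc_or_eq_last a with ⟨a', rfl⟩ | rfl <;>
        rcases Fin.eq_castSucc_or_eq_last b with ⟨b', rfl⟩ | rfl <;>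
        simp only [Fin.lastCases_last, Fin.lastCases_castSucc] at hab
      · rw [σ.injective (Fin.castSucc_injective K hab)]
      · exact absurd hab (Fin.castSucc_lt_last (σ a')).ne
      · exact absurd hab.symm (Fin.castSucc_lt_last (σ b')).ne
      · rfl
    let τ : Equiv.Perm (Fin (K+1)) :=
      Equiv.ofBijective _ ((Finite.injective_iff_bijective).mp hinj)
    have hτlast : τ (Fin.last K) = Fin.last K := by
      simp [τ, Equiv.ofBijective_apply]
    have hτcs : ∀ i : Fin K, τ i.castSucc = (σ i).castSucc := by
      intro i
      simp [τ, Equiv.ofBijective_apply]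
    have := core hK0 d d' horig hto hfrom τ hτlast σ hτcs
    calc (⨅ σ : Equiv.Perm (Fin (K + 1)), cycleCost d' σ) ≤ cycleCost d' τ :=
          ciInf_le (Set.Finite.bddBelow (Set.finite_range _)) τ
      _ = pathCost d σ := this
  · apply le_ciInf
    intro τ
    set c : Fin (K+1) := τ⁻¹ (Fin.last K) - Fin.last K with hc
    set τ' : Equiv.Perm (Fin (K+1)) := (Equiv.addRight c).trans τ with hτ'def
    have hτ'last : τ' (Fin.last K) = Fin.last K := by
      simp only [hτ'def, Equiv.trans_apply, Equiv.coe_addRight, hc]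
      rw [show Fin.last K + (τ⁻¹ (Fin.last K) - Fin.last K) = τ⁻¹ (Fin.last K) by abel]
      simp
    have hne : ∀ i : Fin K, τ' i.castSucc ≠ Fin.last K := by
      intro i h
      have := τ'.injective (h.trans hτ'last.symm)
      exact absurd this (Fin.castSucc_lt_last i).ne
    have hlt : ∀ i : Fin K, (τ' i.castSucc : ℕ) < K := by
      intro i
      have h1 := hne i
      have h2 : (τ' i.castSucc : ℕ) ≠ K := fun h => h1 (Fin.ext h)
      have h3 := (τ' i.castSucc).isLt
      omega
    have hinj2 : Function.Injective (fun i : Fin K => (⟨(τ' i.castSucc : ℕ), hlt i⟩ : Fin K)) := by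
      intro a b hab
      have : (τ' a.castSucc : ℕ) = (τ' b.castSucc : ℕ) := by
        simpa using congrArg Fin.val hab
      exact Fin.castSucc_injective K (τ'.injective (Fin.ext this))
    let σ : Equiv.Perm (Fin K) :=
      Equiv.ofBijective _ ((Finite.injective_iff_bijective).mp hinj2)
    have hσ : ∀ i : Fin K, τ' i.castSucc = (σ i).castSucc := by
      intro i
      ext
      rfl
    have h1 := core hK0 d d' horig hto hfrom τ' hτ'last σ hσ
    have h2 := cycleCost_rot d' τ c
    calc (⨅ σ : Equiv.Perm (Fin K), pathCost d σ) ≤ pathCost d σ :=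
          ciInf_le (Set.Finite.bddBelow (Set.finite_range _)) σ
      _ = cycleCost d' τ' := h1.symm
      _ = cycleCost d' τ := h2
end

section
/- Let $K \ge 3$, let $d : \mathrm{Fin}\,K \to \mathrm{Fin}\,K \to \mathbb{R}$ be a nonnegative symmetric distance function, and let $A \ne B$ be two vertices. Let $M > \sum_{i,j} d(i,j)$. Extend $d$ to $d'$ on $K+1$ vertices by adding a dummy vertex whose distance to and from $A$ and $B$ is $0$ and whose distance to and from every other vertex is $M$. Then the minimum over all Hamiltonian cycles on the $K+1$ vertices of the total cycle length under $d'$ equals the minimum over all Hamiltonian paths on the original $K$ vertices that start at $A$ and end at $B$ of the total path length under $d$. -/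
lemma optSome {α : Type*} (e : Option α ≃ Option α) (h : e none = none) (x : α) :
    e (some x) = some (e.removeNone x) := by
  have hx : ∃ x', e (some x) = some x' := by
    cases h2 : e (some x) with
    | none => exact absurd (e.injective (h2.trans h.symm)) (by simp)
    | some y => exact ⟨y, rfl⟩
  exact (Equiv.removeNone_aux_some e hx).symm

lemma pathCost_nonneg {K : ℕ} (d : Fin K → Fin K → ℝ) (hd : ∀ i j, 0 ≤ d i j)
    (σ : Equiv.Perm (Fin K)) : 0 ≤ pathCost d σ := by
  apply Finset.sum_nonneg
  intro i _
  split
  · exact hd _ _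
  · exact le_rfl

lemma pathCost_le_sum {K : ℕ} (d : Fin K → Fin K → ℝ) (hd : ∀ i j, 0 ≤ d i j)
    (σ : Equiv.Perm (Fin K)) : pathCost d σ ≤ ∑ i : Fin K, ∑ j : Fin K, d i j := by
  have h1 : pathCost d σ ≤ ∑ i : Fin K, ∑ j : Fin K, d (σ i) j := by
    apply Finset.sum_le_sum
    intro i _
    split
    · exact Finset.single_le_sum (fun j _ => hd (σ i) j) (Finset.mem_univ _)
    · exact Finset.sum_nonneg fun j _ => hd _ _
  calc pathCost d σ ≤ _ := h1
    _ = _ := Equiv.sum_comp σ (fun i => ∑ j : Fin K, d i j)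

lemma cycleCost_rotate {K : ℕ} (d : Fin (K+1) → Fin (K+1) → ℝ)
    (τ : Equiv.Perm (Fin (K+1))) (c : Fin (K+1)) :
    cycleCost d ((Equiv.addLeft c).trans τ) = cycleCost d τ := by
  unfold cycleCost
  rw [← Equiv.sum_comp (Equiv.addLeft c) (fun i => d (τ i) (τ (i+1)))]
  apply Finset.sum_congr rfl
  intro i _
  simp [add_assoc]

/-- Reversal of a path does not change its cost when `d` is symmetric. -/
lemma pathCost_rev {K : ℕ} (hK : 1 ≤ K) (d : Fin K → Fin K → ℝ)
    (hsymm : ∀ i j, d i j = d j i) (σ : Equiv.Perm (Fin K)) :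
    pathCost d ((Fin.revPerm).trans σ) = pathCost d σ := by
  unfold pathCost
  simp only [Equiv.trans_apply, Fin.revPerm_apply]
  refine Finset.sum_nbij'
    (fun i => if h : (i : ℕ) + 1 < K then (⟨K - 2 - (i : ℕ), by omega⟩ : Fin K)
      else ⟨K - 1, by omega⟩)
    (fun j => if h : (j : ℕ) + 1 < K then (⟨K - 2 - (j : ℕ), by omega⟩ : Fin K)
      else ⟨K - 1, by omega⟩) (fun _ _ => Finset.mem_univ _) (fun _ _ => Finset.mem_univ _)
    ?_ ?_ ?_
  · intro i _
    by_cases h : (i : ℕ) + 1 < K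
    · rw [dif_pos h]
      have h2 : K - 2 - (i : ℕ) + 1 < K := by omega
      rw [dif_pos h2]
      ext
      simp
      omega
    · rw [dif_neg h]
      have h2 : ¬ (K - 1 + 1 < K) := by omega
      rw [dif_neg (by simpa using h2)]
      ext
      have := i.isLt
      simp
      omega
  · intro j _
    by_cases h : (j : ℕ) + 1 < K
    · rw [dif_pos h]
      have h2 : K - 2 - (j : ℕ) + 1 < K := by omega
      rw [dif_pos h2]
      ext
      simp
      omega
    · rw [dif_neg h]
      have h2 : ¬ (K - 1 + 1 < K) := by omega
      rw [dif_neg (by simpa using h2)]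
      ext
      have := j.isLt
      simp
      omega
  · intro i _
    by_cases h : (i : ℕ) + 1 < K
    · rw [dif_pos h, dif_pos h]
      simp only [Fin.val_mk]
      have h2 : K - 2 - (i : ℕ) + 1 < K := by omega
      rw [dif_pos h2]
      have e1 : Fin.rev i = (⟨K - 2 - (i : ℕ) + 1, h2⟩ : Fin K) := by
        ext
        rw [Fin.val_rev]
        simp only [Fin.val_mk]
        omega
      have e2 : Fin.rev (⟨(i : ℕ) + 1, h⟩ : Fin K) = (⟨K - 2 - (i : ℕ), by omega⟩ : Fin K) := by
        ext
        rw [Fin.val_rev]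
        simp only [Fin.val_mk]
        omega
      rw [e1, e2, hsymm]
    · rw [dif_neg h, dif_neg h]
      simp only [Fin.val_mk]
      rw [dif_neg (by omega)]

/-- Key decomposition: the cost of a cycle fixing the dummy `Fin.last K` is the cost of the
induced path plus the two edges at the dummy. -/
lemma cycleCost_fix_last {K : ℕ} (hK : 1 ≤ K)
    (d' : Fin (K+1) → Fin (K+1) → ℝ) (d : Fin K → Fin K → ℝ)
    (horig : ∀ i j : Fin K, d' i.castSucc j.castSucc = d i j)
    (τ : Equiv.Perm (Fin (K+1))) (σ : Equiv.Perm (Fin K))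
    (hτ : τ (Fin.last K) = Fin.last K)
    (hστ : ∀ i : Fin K, τ i.castSucc = (σ i).castSucc) :
    cycleCost d' τ = pathCost d σ
      + d' (σ ⟨K - 1, by omega⟩).castSucc (Fin.last K)
      + d' (Fin.last K) (σ ⟨0, by omega⟩).castSucc := by
  unfold cycleCost
  rw [Fin.sum_univ_castSucc (fun i : Fin (K+1) => d' (τ i) (τ (i + 1)))]
  have hlast1 : (Fin.last K : Fin (K+1)) + 1 = (⟨0, by omega⟩ : Fin K).castSucc := by
    ext
    simp [Fin.add_def]
  have hterm : ∀ j : Fin K,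
      d' (τ j.castSucc) (τ (j.castSucc + 1))
        = (if h : (j : ℕ) + 1 < K then d (σ j) (σ ⟨(j : ℕ) + 1, h⟩) else 0)
          + (if j = (⟨K - 1, by omega⟩ : Fin K)
              then d' (σ ⟨K - 1, by omega⟩).castSucc (Fin.last K) else 0) := by
    intro j
    by_cases h : (j : ℕ) + 1 < K
    · have hj1 : j.castSucc + 1 = ((⟨(j : ℕ) + 1, h⟩ : Fin K)).castSucc := by
        ext
        simp [Fin.add_def, Nat.mod_eq_of_lt (show (j : ℕ) + 1 < K + 1 by omega)]
      have hne : j ≠ (⟨K - 1, by omega⟩ : Fin K) := by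
        intro hj
        rw [hj] at h
        simp at h
        omega
      rw [dif_pos h, if_neg hne, hj1, hστ, hστ, horig, add_zero]
    · have hj : j = (⟨K - 1, by omega⟩ : Fin K) := by
        ext
        have := j.isLt
        simp
        omega
      have hjv : (j : ℕ) = K - 1 := by
        have := j.isLt
        omega
      have hj1 : j.castSucc + 1 = Fin.last K := by
        ext
        simp only [Fin.add_def, Fin.coe_castSucc, Fin.val_one', Fin.val_last, hjv]
        rw [Nat.mod_eq_of_lt (show (1:ℕ) < K + 1 by omega), Nat.mod_eq_of_lt (by omega)]
        omega
      rw [dif_neg h, if_pos hj, hj1, hστ, hτ, zero_add, hj]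
  rw [Finset.sum_congr rfl (fun j _ => hterm j), Finset.sum_add_distrib]
  rw [Finset.sum_ite_eq' Finset.univ (⟨K - 1, by omega⟩ : Fin K)
    (fun _ => d' (σ ⟨K - 1, by omega⟩).castSucc (Fin.last K))]
  simp only [Finset.mem_univ, if_true]
  rw [hlast1, hτ, hστ]
  rfl

/-- Extend a permutation of `Fin K` to `Fin (K+1)` fixing the last element. -/
noncomputable def extPerm {K : ℕ} (σ : Equiv.Perm (Fin K)) : Equiv.Perm (Fin (K+1)) :=
  finSuccEquivLast.trans ((Equiv.optionCongr σ).trans finSuccEquivLast.symm)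

lemma extPerm_castSucc {K : ℕ} (σ : Equiv.Perm (Fin K)) (i : Fin K) :
    extPerm σ i.castSucc = (σ i).castSucc := by
  simp [extPerm]

lemma extPerm_last {K : ℕ} (σ : Equiv.Perm (Fin K)) :
    extPerm σ (Fin.last K) = Fin.last K := by
  simp [extPerm]

/-- **Appendix C of the paper, variation `NoReturn-GivenOriginAndEnd`.**
For `K ≥ 3` cities with nonnegative symmetric distances `d`, two distinct cities
`A ≠ B`, and `M` larger than the sum of all pairwise distances, extend `d` to `d'`
by adding a dummy city (the vertex `Fin.last K`) at distance `0` to and from `A` and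
`B` and at distance `M` to and from every other city.  Then the minimum total length
over all Hamiltonian cycles on the `K+1` cities under `d'` equals the minimum total
length over all Hamiltonian paths on the original `K` cities starting at `A` and
ending at `B` under `d`. -/
theorem tsp_dummy_given_origin_and_end
    (K : ℕ) (hK : 3 ≤ K) (d : Fin K → Fin K → ℝ)
    (hd : ∀ i j, 0 ≤ d i j) (hsymm : ∀ i j, d i j = d j i)
    (A B : Fin K) (hAB : A ≠ B)
    (M : ℝ) (hM : (∑ i : Fin K, ∑ j : Fin K, d i j) < M)
    (d' : Fin (K + 1) → Fin (K + 1) → ℝ)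
    (horig : ∀ i j : Fin K, d' i.castSucc j.castSucc = d i j)
    (hA : d' A.castSucc (Fin.last K) = 0 ∧ d' (Fin.last K) A.castSucc = 0)
    (hB : d' B.castSucc (Fin.last K) = 0 ∧ d' (Fin.last K) B.castSucc = 0)
    (hother : ∀ i : Fin K, i ≠ A → i ≠ B →
      d' i.castSucc (Fin.last K) = M ∧ d' (Fin.last K) i.castSucc = M) :
    (⨅ σ : Equiv.Perm (Fin (K + 1)), cycleCost d' σ)
      = ⨅ σ : {σ : Equiv.Perm (Fin K) //
          σ ⟨0, by omega⟩ = A ∧ σ ⟨K - 1, by omega⟩ = B},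
          pathCost d σ.val := by
  have hK1 : 1 ≤ K := by omega
  set i0 : Fin K := ⟨0, by omega⟩ with hi0
  set iK : Fin K := ⟨K - 1, by omega⟩ with hiK
  have hi0K : i0 ≠ iK := by
    simp only [hi0, hiK, ne_eq, Fin.mk.injEq]
    omega
  -- a witness endpoint-constrained permutation
  have hwitness : ∃ σ : Equiv.Perm (Fin K), σ i0 = A ∧ σ iK = B := by
    set σ₀ : Equiv.Perm (Fin K) := Equiv.swap i0 A with hσ₀
    have h0A : σ₀ i0 = A := Equiv.swap_apply_left _ _
    have hne : σ₀ iK ≠ A := by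
      intro h
      exact hi0K (σ₀.injective (h0A.trans h.symm))
    refine ⟨(σ₀.trans (Equiv.swap B (σ₀ iK))), ?_, ?_⟩
    · simp only [Equiv.trans_apply, h0A]
      rw [Equiv.swap_apply_of_ne_of_ne hAB hne.symm]
    · simp only [Equiv.trans_apply]
      exact Equiv.swap_apply_right _ _
  obtain ⟨σ₀, hσ₀A, hσ₀B⟩ := hwitness
  haveI hne : Nonempty {σ : Equiv.Perm (Fin K) // σ i0 = A ∧ σ iK = B} :=
    ⟨⟨σ₀, hσ₀A, hσ₀B⟩⟩
  have hM0 : 0 ≤ M :=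
    le_of_lt (lt_of_le_of_lt (Finset.sum_nonneg fun i _ =>
      Finset.sum_nonneg fun j _ => hd i j) hM)
  have hd'L : ∀ x : Fin K, 0 ≤ d' x.castSucc (Fin.last K) ∧ 0 ≤ d' (Fin.last K) x.castSucc := by
    intro x
    by_cases hxA : x = A
    · subst hxA; rw [hA.1, hA.2]; exact ⟨le_rfl, le_rfl⟩
    by_cases hxB : x = B
    · subst hxB; rw [hB.1, hB.2]; exact ⟨le_rfl, le_rfl⟩
    · rw [(hother x hxA hxB).1, (hother x hxA hxB).2]; exact ⟨hM0, hM0⟩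
  apply le_antisymm
  · -- cycle min ≤ path min
    apply le_ciInf
    rintro ⟨σ, hσA, hσB⟩
    have hext := cycleCost_fix_last hK1 d' d horig (extPerm σ) σ (extPerm_last σ)
      (extPerm_castSucc σ)
    calc (⨅ τ : Equiv.Perm (Fin (K + 1)), cycleCost d' τ) ≤ cycleCost d' (extPerm σ)
          := ciInf_le (Finite.bddBelow_range _) _
      _ = pathCost d σ := by
          rw [hext, hσB, hσA, hA.2, hB.1]
          ring
  · -- path min ≤ cycle min
    apply le_ciInf
    intro τ
    set p : Fin (K+1) := τ.symm (Fin.last K) with hp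
    set τ' : Equiv.Perm (Fin (K+1)) := (Equiv.addLeft (p+1)).trans τ with hτ'
    have hrot : cycleCost d' τ' = cycleCost d' τ := cycleCost_rotate d' τ (p+1)
    have hτ'last : τ' (Fin.last K) = Fin.last K := by
      have h1 : (p + 1) + Fin.last K = p := by
        have hlneg : Fin.last K = (-1 : Fin (K+1)) := by
          ext
          rw [Fin.coe_neg_one]
          rfl
        rw [hlneg]
        exact add_neg_cancel_right p 1
      show τ ((p + 1) + Fin.last K) = Fin.last K
      rw [h1, hp, Equiv.apply_symm_apply]
    -- extract the inner permutation
    set eOpt : Option (Fin K) ≃ Option (Fin K) :=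
      finSuccEquivLast.symm.trans (τ'.trans finSuccEquivLast) with heOpt
    have heNone : eOpt none = none := by
      simp [heOpt, hτ'last]
    set σ : Equiv.Perm (Fin K) := eOpt.removeNone with hσ
    have hστ : ∀ i : Fin K, τ' i.castSucc = (σ i).castSucc := by
      intro i
      have h1 : eOpt (some i) = some (σ i) := optSome eOpt heNone i
      have h2 : finSuccEquivLast (τ' i.castSucc) = some (σ i) := by
        simpa [heOpt] using h1
      have := congrArg finSuccEquivLast.symm h2
      simpa using this
    have hdec := cycleCost_fix_last hK1 d' d horig τ' σ hτ'last hστ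
    set a : Fin K := σ i0 with ha
    set b : Fin K := σ iK with hb
    have hab : a ≠ b := fun h => hi0K (σ.injective h)
    have hbound : (⨅ σp : {σ : Equiv.Perm (Fin K) // σ i0 = A ∧ σ iK = B},
        pathCost d σp.val) ≤ cycleCost d' τ' := by
      by_cases hcase1 : a = A ∧ b = B
      · calc _ ≤ pathCost d σ := ciInf_le (Finite.bddBelow_range _)
              (⟨σ, hcase1.1, hcase1.2⟩ : {σ : Equiv.Perm (Fin K) // σ i0 = A ∧ σ iK = B})
          _ = cycleCost d' τ' := by
              rw [hdec, hcase1.1, hcase1.2, hA.2, hB.1]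
              ring
      · by_cases hcase2 : a = B ∧ b = A
        · -- reverse the path
          set σr : Equiv.Perm (Fin K) := (Fin.revPerm).trans σ with hσr
          have hri0 : Fin.rev i0 = iK := by
            rw [hi0, hiK]
            ext
            rw [Fin.val_rev]
            try simp only [Fin.val_mk]
            try omega
          have hriK : Fin.rev iK = i0 := by
            rw [hiK, hi0]
            ext
            rw [Fin.val_rev]
            try simp only [Fin.val_mk]
            try omega
          have hrA : σr i0 = A := by
            show σ (Fin.rev i0) = A
            rw [hri0, ← hb, hcase2.2]
          have hrB : σr iK = B := by
            show σ (Fin.rev iK) = B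
            rw [hriK, ← ha, hcase2.1]
          calc _ ≤ pathCost d σr := ciInf_le (Finite.bddBelow_range _)
                (⟨σr, hrA, hrB⟩ : {σ : Equiv.Perm (Fin K) // σ i0 = A ∧ σ iK = B})
            _ = pathCost d σ := pathCost_rev hK1 d hsymm σ
            _ = cycleCost d' τ' := by
                rw [hdec, hcase2.1, hcase2.2, hA.1, hB.2]
                ring
        · -- an edge at the dummy costs M
          have hMedge : M ≤ d' b.castSucc (Fin.last K) + d' (Fin.last K) a.castSucc := by
            by_cases haA : a = A
            · have hbB : b ≠ B := fun h => hcase1 ⟨haA, h⟩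
              have hbA : b ≠ A := fun h => hab (haA.trans h.symm)
              rw [(hother b hbA hbB).1]
              have := (hd'L a).2
              linarith
            · by_cases haB : a = B
              · have hbA : b ≠ A := fun h => hcase2 ⟨haB, h⟩
                have hbB : b ≠ B := fun h => hab (haB.trans h.symm)
                rw [(hother b hbA hbB).1]
                have := (hd'L a).2
                linarith
              · rw [(hother a haA haB).2]
                have := (hd'L b).1
                linarith
          have h1 : (⨅ σp : {σ : Equiv.Perm (Fin K) // σ i0 = A ∧ σ iK = B},
              pathCost d σp.val) ≤ pathCost d σ₀ :=
            ciInf_le (Finite.bddBelow_range _)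
              (⟨σ₀, hσ₀A, hσ₀B⟩ : {σ : Equiv.Perm (Fin K) // σ i0 = A ∧ σ iK = B})
          have h2 : pathCost d σ₀ < M := lt_of_le_of_lt (pathCost_le_sum d hd σ₀) hM
          have h3 : 0 ≤ pathCost d σ := pathCost_nonneg d hd σ
          rw [hdec]
          linarith
    calc (⨅ σp : {σ : Equiv.Perm (Fin K) // σ i0 = A ∧ σ iK = B},
          pathCost d σp.val) ≤ cycleCost d' τ' := hbound
      _ = cycleCost d' τ := hrot
end

section
/- Let $K$ be a natural number, $w : \mathrm{Fin}\,K \to \mathbb{R}^2$ (locations of the ground terminals), $D \ge 0$, $T_{\min} \ge 0$, $V > 0$ and $T > 0$. Let $q : [0,T] \to \mathbb{R}^2$ be $V$-Lipschitz, suppose that for every $k$ the Lebesgue measure of $\{t \in [0,T] : \|q(t) - w(k)\| \le D\}$ is at least $T_{\min}$, and suppose there exist finitely many times $0 = t_0 < t_1 < \dots < t_{L+1} = T$ such that for each $l \in \{1,\dots,L+1\}$ the set $\{k : \|q(t) - w(k)\| \le D\}$ is the same for all $t$ in the half-open interval $[t_{l-1}, t_l)$. Then there exist $\hat T \in (0,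 T]$ and a map $\hat q : [0,\hat T] \to \mathbb{R}^2$ that is $V$-Lipschitz and piecewise affine (i.e., there are finitely many times $0 = s_0 < s_1 < \dots < s_J = \hat T$ such that $\hat q$ is affine on each interval $[s_{j-1}, s_j]$) such that for every $k$ the Lebesgue measure of $\{t \in [0,\hat T] : \|\hat q(t) - w(k)\| \le D\}$ is at least $T_{\min}$. -/
open MeasureTheory

open Classical in
noncomputable def pwIdx (ts : ℕ → ℝ) (L : ℕ) (t : ℝ) : ℕ :=
  Nat.findGreatest (fun l => ts l ≤ t) L

/-- Affine interpolation of `q` between `ts j` and `ts (j+1)`. -/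
noncomputable def pwAff (q : ℝ → EuclideanSpace ℝ (Fin 2)) (ts : ℕ → ℝ) (j : ℕ) (t : ℝ) :
    EuclideanSpace ℝ (Fin 2) :=
  q (ts j) + ((t - ts j) / (ts (j + 1) - ts j)) • (q (ts (j + 1)) - q (ts j))

lemma seg_norm_le {E : Type*} [NormedAddCommGroup E] [NormedSpace ℝ E]
    {a b wk : E} {D θ : ℝ} (hθ0 : 0 ≤ θ) (hθ1 : θ ≤ 1)
    (ha : ‖a - wk‖ ≤ D) (hb : ‖b - wk‖ ≤ D) :
    ‖a + θ • (b - a) - wk‖ ≤ D := by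
  have h : a + θ • (b - a) - wk = (1 - θ) • (a - wk) + θ • (b - wk) := by module
  rw [h]
  calc ‖(1 - θ) • (a - wk) + θ • (b - wk)‖
      ≤ ‖(1 - θ) • (a - wk)‖ + ‖θ • (b - wk)‖ := norm_add_le _ _
    _ = (1 - θ) * ‖a - wk‖ + θ * ‖b - wk‖ := by
        rw [norm_smul, norm_smul, Real.norm_eq_abs, Real.norm_eq_abs,
          abs_of_nonneg (by linarith), abs_of_nonneg hθ0]
    _ ≤ (1 - θ) * D + θ * D := by
        nlinarith [norm_nonneg (a - wk), norm_nonneg (b - wk)]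
    _ = D := by ring

/-- **Theorem 2 of the paper.** Consider ground terminals `w k ∈ ℝ²`, a connection
distance `D ≥ 0`, a minimum connection time `T_min ≥ 0`, a maximum speed `V > 0`,
and a mission time `T > 0`.  Suppose the trajectory `q : [0,T] → ℝ²` is
`V`-Lipschitz, the Lebesgue measure of the connection time
`{t ∈ [0,T] : ‖q t - w k‖ ≤ D}` of each terminal `k` is at least `T_min`, and the
set of connected terminals `{k : ‖q t - w k‖ ≤ D}` changes only at finitely many
times `0 = t₀ < t₁ < ⋯ < t_{L+1} = T` (being constant on each `[t_{l-1}, t_l)`).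
Then there exist a duration `T̂ ∈ (0, T]` and a trajectory `q̂ : [0, T̂] → ℝ²` that
is `V`-Lipschitz and piecewise affine (affine on each interval of a finite partition
`0 = s₀ < s₁ < ⋯ < s_J = T̂`) such that every terminal's connection time under `q̂`
is still at least `T_min`. -/
theorem trajectory_piecewise_linear_wlog
    (K : ℕ) (w : Fin K → EuclideanSpace ℝ (Fin 2))
    (D Tmin V T : ℝ) (hD : 0 ≤ D) (hTmin : 0 ≤ Tmin) (hV : 0 < V) (hT : 0 < T)
    (q : ℝ → EuclideanSpace ℝ (Fin 2))
    (hLip : ∀ s ∈ Set.Icc 0 T, ∀ t ∈ Set.Icc 0 T, ‖q s - q t‖ ≤ V * |s - t|)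
    (hconn : ∀ k : Fin K,
      ENNReal.ofReal Tmin ≤ volume {t ∈ Set.Icc 0 T | ‖q t - w k‖ ≤ D})
    (hpiece : ∃ L : ℕ, ∃ ts : ℕ → ℝ, ts 0 = 0 ∧ ts (L + 1) = T ∧
      (∀ l ≤ L, ts l < ts (l + 1)) ∧
      (∀ l ≤ L, ∀ s₁ ∈ Set.Ico (ts l) (ts (l + 1)), ∀ s₂ ∈ Set.Ico (ts l) (ts (l + 1)),
        {k : Fin K | ‖q s₁ - w k‖ ≤ D} = {k : Fin K | ‖q s₂ - w k‖ ≤ D})) :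
    ∃ That ∈ Set.Ioc (0 : ℝ) T, ∃ qhat : ℝ → EuclideanSpace ℝ (Fin 2),
      (∀ s ∈ Set.Icc 0 That, ∀ t ∈ Set.Icc 0 That, ‖qhat s - qhat t‖ ≤ V * |s - t|) ∧
      (∃ J : ℕ, ∃ ss : ℕ → ℝ, ss 0 = 0 ∧ ss J = That ∧
        (∀ j < J, ss j < ss (j + 1)) ∧
        (∀ j < J, ∃ u v : EuclideanSpace ℝ (Fin 2),
          ∀ t ∈ Set.Icc (ss j) (ss (j + 1)), qhat t = u + t • v)) ∧
      (∀ k : Fin K,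
        ENNReal.ofReal Tmin ≤ volume {t ∈ Set.Icc 0 That | ‖qhat t - w k‖ ≤ D}) := by
  classical
  obtain ⟨L, ts, hts0, htsT, hlt, hconst⟩ := hpiece
  -- monotonicity of the knots
  have mono : ∀ a b : ℕ, a ≤ b → b ≤ L + 1 → ts a ≤ ts b := by
    intro a b hab hbL
    induction b with
    | zero =>
      have : a = 0 := Nat.le_zero.mp hab
      simp [this]
    | succ n ih =>
      rcases Nat.lt_or_ge a (n + 1) with h | h
      · exact le_trans (ih (Nat.lt_succ_iff.mp h) (by omega)) (le_of_lt (hlt n (by omega)))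
      · have : a = n + 1 := le_antisymm hab h
        simp [this]
  have smono : ∀ a b : ℕ, a < b → b ≤ L + 1 → ts a < ts b := by
    intro a b hab hbL
    calc ts a < ts (a + 1) := hlt a (by omega)
      _ ≤ ts b := mono _ _ (by omega) hbL
  have h0 : ∀ l ≤ L + 1, 0 ≤ ts l := by
    intro l hl
    have := mono 0 l (Nat.zero_le _) hl
    rwa [hts0] at this
  have hTl : ∀ l ≤ L + 1, ts l ≤ T := by
    intro l hl
    have := mono l (L + 1) hl le_rfl
    rwa [htsT] at this
  -- basic facts about the index function
  have hidx_le : ∀ t, pwIdx ts L t ≤ L :=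
    fun t => Nat.findGreatest_le (P := fun l => ts l ≤ t) L
  have hidx_ts : ∀ t, 0 ≤ t → ts (pwIdx ts L t) ≤ t := by
    intro t ht
    exact Nat.findGreatest_spec (P := fun l => ts l ≤ t) (Nat.zero_le L)
      (show ts 0 ≤ t by rw [hts0]; exact ht)
  have hidx_ge : ∀ j ≤ L, ∀ t : ℝ, ts j ≤ t → j ≤ pwIdx ts L t := by
    intro j hj t h
    exact Nat.le_findGreatest (P := fun l => ts l ≤ t) hj h
  have hidx_lt : ∀ t, t < T → t < ts (pwIdx ts L t + 1) := by
    intro t ht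
    by_contra h
    push_neg at h
    rcases Nat.lt_or_ge (pwIdx ts L t) L with hL | hL
    · have := hidx_ge (pwIdx ts L t + 1) (by omega) t h
      omega
    · have hl : pwIdx ts L t = L := le_antisymm (hidx_le t) hL
      rw [hl, htsT] at h
      linarith
  have hidx_eq : ∀ j ≤ L, pwIdx ts L (ts j) = j := by
    intro j hj
    refine le_antisymm ?_ (hidx_ge j hj _ le_rfl)
    by_contra h
    push_neg at h
    have h1 : ts (pwIdx ts L (ts j)) ≤ ts j := hidx_ts (ts j) (h0 j (by omega))
    have h2 : ts j < ts (pwIdx ts L (ts j)) :=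
      smono j _ h (by have := hidx_le (ts j); omega)
    linarith
  have hidxT : pwIdx ts L T = L :=
    le_antisymm (hidx_le T) (hidx_ge L le_rfl T (hTl L (by omega)))
  have hle' : ∀ t, 0 ≤ t → t ≤ T → t ≤ ts (pwIdx ts L t + 1) := by
    intro t h1 h2
    rcases lt_or_eq_of_le h2 with h | h
    · exact le_of_lt (hidx_lt t h)
    · subst h
      rw [hidxT, htsT]
  -- the piecewise-affine trajectory
  set qhat : ℝ → EuclideanSpace ℝ (Fin 2) := fun t => pwAff q ts (pwIdx ts L t) t with hqhat_def
  have hq : ∀ t, qhat t = pwAff q ts (pwIdx ts L t) t := fun t => rfl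
  -- on each closed piece, qhat agrees with the corresponding affine map
  have hpiece' : ∀ j ≤ L, ∀ t, ts j ≤ t → t ≤ ts (j + 1) → qhat t = pwAff q ts j t := by
    intro j hj t h1 h2
    rcases lt_or_eq_of_le h2 with h | h
    · have hij : pwIdx ts L t = j := by
        refine le_antisymm ?_ (hidx_ge j hj t h1)
        by_contra hc
        push_neg at hc
        have hx : ts (j + 1) ≤ ts (pwIdx ts L t) :=
          mono (j + 1) (pwIdx ts L t) hc (by have := hidx_le t; omega)
        have h3 : ts (pwIdx ts L t) ≤ t := hidx_ts t (le_trans (h0 j (by omega)) h1)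
        linarith
      rw [hq, hij]
    · subst h
      rcases Nat.lt_or_ge j L with hjL | hjL
      · have hij : pwIdx ts L (ts (j + 1)) = j + 1 := hidx_eq (j + 1) (by omega)
        have hΔ : ts (j + 1) - ts j ≠ 0 := ne_of_gt (sub_pos.mpr (hlt j hj))
        rw [hq, hij, pwAff, pwAff, sub_self, zero_div, zero_smul, add_zero,
          div_self hΔ, one_smul]
        abel
      · have hj' : j = L := le_antisymm hj hjL
        have hij : pwIdx ts L (ts (j + 1)) = j := by rw [hj', htsT]; exact hidxT
        rw [hq, hij]
  -- Lipschitz bound for each affine piece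
  have hfLip : ∀ j ≤ L, ∀ s t : ℝ, ‖pwAff q ts j s - pwAff q ts j t‖ ≤ V * |s - t| := by
    intro j hj s t
    have hΔ : (0 : ℝ) < ts (j + 1) - ts j := sub_pos.mpr (hlt j hj)
    have hdiff : pwAff q ts j s - pwAff q ts j t
        = ((s - t) / (ts (j + 1) - ts j)) • (q (ts (j + 1)) - q (ts j)) := by
      rw [pwAff, pwAff, add_sub_add_left_eq_sub, ← sub_smul, div_sub_div_same,
        sub_sub_sub_cancel_right]
    have hqd : ‖q (ts (j + 1)) - q (ts j)‖ ≤ V * (ts (j + 1) - ts j) := by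
      have := hLip (ts (j + 1)) ⟨h0 _ (by omega), hTl _ (by omega)⟩
        (ts j) ⟨h0 _ (by omega), hTl _ (by omega)⟩
      rwa [abs_of_pos hΔ] at this
    rw [hdiff, norm_smul, Real.norm_eq_abs, abs_div, abs_of_pos hΔ]
    calc |s - t| / (ts (j + 1) - ts j) * ‖q (ts (j + 1)) - q (ts j)‖
        ≤ |s - t| / (ts (j + 1) - ts j) * (V * (ts (j + 1) - ts j)) :=
          mul_le_mul_of_nonneg_left hqd (div_nonneg (abs_nonneg _) hΔ.le)
      _ = V * |s - t| := by field_simp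
  -- global Lipschitz bound, by induction on the number of pieces crossed
  have key : ∀ n : ℕ, ∀ s t : ℝ, 0 ≤ s → s ≤ t → t ≤ T →
      pwIdx ts L t ≤ pwIdx ts L s + n → ‖qhat s - qhat t‖ ≤ V * (t - s) := by
    intro n
    induction n with
    | zero =>
      intro s t hs hst htT hi
      have ht0 : (0 : ℝ) ≤ t := le_trans hs hst
      have h1 : pwIdx ts L s ≤ pwIdx ts L t :=
        hidx_ge (pwIdx ts L s) (hidx_le s) t (le_trans (hidx_ts s hs) hst)
      have heq : pwIdx ts L s = pwIdx ts L t := by omega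
      have hiL : pwIdx ts L t ≤ L := hidx_le t
      have hts_s : ts (pwIdx ts L t) ≤ s := by rw [← heq]; exact hidx_ts s hs
      have ht2 : t ≤ ts (pwIdx ts L t + 1) := hle' t ht0 htT
      have hs2 : s ≤ ts (pwIdx ts L t + 1) := le_trans hst ht2
      rw [hpiece' _ hiL s hts_s hs2, hpiece' _ hiL t (hidx_ts t ht0) ht2]
      have := hfLip _ hiL s t
      rwa [abs_sub_comm, abs_of_nonneg (by linarith)] at this
    | succ n ih =>
      intro s t hs hst htT hi
      rcases le_or_gt (pwIdx ts L t) (pwIdx ts L s) with h | h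
      · exact ih s t hs hst htT (by omega)
      · have hiL : pwIdx ts L s ≤ L := hidx_le s
        have hisL : pwIdx ts L s + 1 ≤ L := by have := hidx_le t; omega
        set r := ts (pwIdx ts L s + 1) with hr
        have hsr : s ≤ r := hle' s hs (le_trans hst htT)
        have hrt : r ≤ t :=
          le_trans (mono (pwIdx ts L s + 1) (pwIdx ts L t) h (by have := hidx_le t; omega))
            (hidx_ts t (le_trans hs hst))
        have hr0 : (0 : ℝ) ≤ r := h0 _ (by omega)
        have hidxr : pwIdx ts L r = pwIdx ts L s + 1 := hidx_eq _ hisL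
        have h1 : ‖qhat s - qhat r‖ ≤ V * (r - s) := by
          rw [hpiece' (pwIdx ts L s) hiL s (hidx_ts s hs) hsr,
            hpiece' (pwIdx ts L s) hiL r (le_of_lt (hlt _ hiL)) le_rfl]
          have := hfLip (pwIdx ts L s) hiL s r
          rwa [abs_sub_comm, abs_of_nonneg (by linarith)] at this
        have h2 : ‖qhat r - qhat t‖ ≤ V * (t - r) := ih r t hr0 hrt htT (by omega)
        have tri : ‖qhat s - qhat t‖ ≤ ‖qhat s - qhat r‖ + ‖qhat r - qhat t‖ := by
          have := dist_triangle (qhat s) (qhat r) (qhat t)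
          simpa [dist_eq_norm] using this
        linarith
  -- right-endpoint connectivity, by continuity (Lipschitz bound)
  have hclose : ∀ j ≤ L, ∀ k : Fin K,
      (∀ s, ts j ≤ s → s < ts (j + 1) → ‖q s - w k‖ ≤ D) → ‖q (ts (j + 1)) - w k‖ ≤ D := by
    intro j hj k hall
    refine le_of_forall_pos_le_add ?_
    intro ε hε
    set s := max (ts j) (ts (j + 1) - ε / V) with hs
    have hs1 : ts j ≤ s := le_max_left _ _
    have hεV : 0 < ε / V := div_pos hε hV
    have hs2 : s < ts (j + 1) := max_lt (hlt j hj) (by linarith)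
    have hsI : s ∈ Set.Icc (0 : ℝ) T :=
      ⟨le_trans (h0 j (by omega)) hs1, le_trans hs2.le (hTl (j + 1) (by omega))⟩
    have hqs := hall s hs1 hs2
    have hlip := hLip (ts (j + 1)) ⟨h0 _ (by omega), hTl _ (by omega)⟩ s hsI
    have habs : |ts (j + 1) - s| ≤ ε / V := by
      rw [abs_of_nonneg (by linarith)]
      have : ts (j + 1) - ε / V ≤ s := le_max_right _ _
      linarith
    have tri : ‖q (ts (j + 1)) - w k‖ ≤ ‖q (ts (j + 1)) - q s‖ + ‖q s - w k‖ := by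
      have := dist_triangle (q (ts (j + 1))) (q s) (w k)
      simpa [dist_eq_norm] using this
    have : ‖q (ts (j + 1)) - q s‖ ≤ ε := by
      calc ‖q (ts (j + 1)) - q s‖ ≤ V * |ts (j + 1) - s| := hlip
        _ ≤ V * (ε / V) := mul_le_mul_of_nonneg_left habs hV.le
        _ = ε := by field_simp
    linarith
  -- assemble the conclusion
  refine ⟨T, ⟨hT, le_rfl⟩, qhat, ?_, ⟨L + 1, ts, hts0, htsT,
    fun j hj => hlt j (by omega), ?_⟩, ?_⟩
  · -- Lipschitz
    intro s hs t ht
    rcases le_total s t with h | h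
    · have := key (L + 1) s t hs.1 h ht.2 (by have := hidx_le t; omega)
      rwa [abs_sub_comm, abs_of_nonneg (by linarith)]
    · have := key (L + 1) t s ht.1 h hs.2 (by have := hidx_le s; omega)
      rw [abs_of_nonneg (by linarith)]
      rwa [norm_sub_rev]
  · -- piecewise affine
    intro j hj
    have hjL : j ≤ L := by omega
    have hΔ : (0 : ℝ) < ts (j + 1) - ts j := sub_pos.mpr (hlt j hjL)
    refine ⟨q (ts j) - (ts j / (ts (j + 1) - ts j)) • (q (ts (j + 1)) - q (ts j)),
      (ts (j + 1) - ts j)⁻¹ • (q (ts (j + 1)) - q (ts j)), ?_⟩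
    intro t htI
    rw [hpiece' j hjL t htI.1 htI.2, pwAff]
    rw [div_eq_mul_inv, div_eq_mul_inv, sub_mul, sub_smul, smul_smul]
    abel
  · -- connection times
    intro k
    have hsub : {t ∈ Set.Icc (0:ℝ) T | ‖q t - w k‖ ≤ D} \ {T}
        ⊆ {t ∈ Set.Icc (0:ℝ) T | ‖qhat t - w k‖ ≤ D} := by
      rintro t ⟨⟨htI, hqt⟩, htT⟩
      have htT' : t < T := lt_of_le_of_ne htI.2 (by simpa using htT)
      have hiL : pwIdx ts L t ≤ L := hidx_le t
      have h1 : ts (pwIdx ts L t) ≤ t := hidx_ts t htI.1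
      have h2 : t < ts (pwIdx ts L t + 1) := hidx_lt t htT'
      have hallS : ∀ s, ts (pwIdx ts L t) ≤ s → s < ts (pwIdx ts L t + 1) →
          ‖q s - w k‖ ≤ D := by
        intro s hs1 hs2
        have heq := hconst (pwIdx ts L t) hiL t ⟨h1, h2⟩ s ⟨hs1, hs2⟩
        have hk : k ∈ {k : Fin K | ‖q t - w k‖ ≤ D} := hqt
        rw [heq] at hk
        exact hk
      have ha : ‖q (ts (pwIdx ts L t)) - w k‖ ≤ D := hallS _ le_rfl (hlt _ hiL)
      have hb : ‖q (ts (pwIdx ts L t + 1)) - w k‖ ≤ D := hclose _ hiL k hallS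
      have hΔ : (0 : ℝ) < ts (pwIdx ts L t + 1) - ts (pwIdx ts L t) :=
        sub_pos.mpr (hlt _ hiL)
      have hθ0 : 0 ≤ (t - ts (pwIdx ts L t)) / (ts (pwIdx ts L t + 1) - ts (pwIdx ts L t)) :=
        div_nonneg (by linarith) hΔ.le
      have hθ1 : (t - ts (pwIdx ts L t)) / (ts (pwIdx ts L t + 1) - ts (pwIdx ts L t)) ≤ 1 :=
        (div_le_one hΔ).mpr (by linarith)
      refine ⟨htI, ?_⟩
      rw [hq, pwAff]
      exact seg_norm_le hθ0 hθ1 ha hb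
    calc ENNReal.ofReal Tmin ≤ volume {t ∈ Set.Icc (0:ℝ) T | ‖q t - w k‖ ≤ D} := hconn k
      _ = volume ({t ∈ Set.Icc (0:ℝ) T | ‖q t - w k‖ ≤ D} \ {T}) :=
          (measure_diff_null (by simp)).symm
      _ ≤ volume {t ∈ Set.Icc (0:ℝ) T | ‖qhat t - w k‖ ≤ D} := measure_mono hsub
end
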